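/- Let X be a nonempty set, Θ ⊆ ℝ a nondegenerate open interval, and ψ : X × Θ → ℝ a T₁-function with ϑ₁ : X → Θ. Suppose that ψ is a T₂^{λ}-function for every weight vector λ = (λ₁, λ₂) with λ₁, λ₂ > 0. Then for each x, y ∈ X with ϑ₁(x) < ϑ₁(y), the function (ϑ₁(x), ϑ₁(y)) ∋ t ↦ −ψ(x,t)/ψ(y,t) is strictly increasing. -/

import Mathlib

open Set

theorem stmt11 (X : Type*) [Nonempty X]
    (Θ : Set ℝ) (hopen : IsOpen Θ) (hconn : Θ.OrdConnected) (hnt : Θ.Nontrivial)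
    (ψ : X → ℝ → ℝ) (ϑ1 : X → ℝ) (hmap : ∀ x, ϑ1 x ∈ Θ)
    (hT1 : ∀ x, (∀ t ∈ Θ, t < ϑ1 x → 0 < ψ x t) ∧ (∀ t ∈ Θ, ϑ1 x < t → ψ x t < 0))
    (hT2 : ∀ c₁ c₂ : ℝ, 0 < c₁ → 0 < c₂ →
      ∃ ϑ2 : X → X → ℝ, (∀ x y, ϑ2 x y ∈ Θ) ∧ ∀ x y, ∀ t ∈ Θ,
        (t < ϑ2 x y → 0 < c₁ * ψ x t + c₂ * ψ y t) ∧
        (ϑ2 x y < t → c₁ * ψ x t + c₂ * ψ y t < 0))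
    (x y : X) (hxy : ϑ1 x < ϑ1 y) :
    StrictMonoOn (fun t => -ψ x t / ψ y t) (Set.Ioo (ϑ1 x) (ϑ1 y)) := by
  intro s hs t ht hst
  have hsΘ : s ∈ Θ := hconn.out (hmap x) (hmap y) ⟨le_of_lt hs.1, le_of_lt hs.2⟩
  have htΘ : t ∈ Θ := hconn.out (hmap x) (hmap y) ⟨le_of_lt ht.1, le_of_lt ht.2⟩
  have hψxs : ψ x s < 0 := (hT1 x).2 s hsΘ hs.1
  have hψys : 0 < ψ y s := (hT1 y).1 s hsΘ hs.2
  have hψxt : ψ x t < 0 := (hT1 x).2 t htΘ ht.1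
  have hψyt : 0 < ψ y t := (hT1 y).1 t htΘ ht.2
  set c₂ := -ψ x s / ψ y s with hc₂
  have hc₂pos : 0 < c₂ := div_pos (neg_pos.mpr hψxs) hψys
  obtain ⟨ϑ2, hϑ2Θ, hϑ2⟩ := hT2 1 c₂ one_pos hc₂pos
  have hzero : 1 * ψ x s + c₂ * ψ y s = 0 := by
    rw [hc₂]; field_simp; ring
  have hs_eq : s = ϑ2 x y := by
    rcases lt_trichotomy s (ϑ2 x y) with h | h | h
    · have := (hϑ2 x y s hsΘ).1 h; linarith
    · exact h
    · have := (hϑ2 x y s hsΘ).2 h; linarith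
  have hneg : 1 * ψ x t + c₂ * ψ y t < 0 := (hϑ2 x y t htΘ).2 (hs_eq ▸ hst)
  show -ψ x s / ψ y s < -ψ x t / ψ y t
  rw [← hc₂, lt_div_iff₀ hψyt]
  nlinarith
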